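/- Let Y, Z : ℝ → Matrix (Fin 3) (Fin 3) ℂ be differentiable functions satisfying Y'(τ) = C · Z(τ) and Z'(τ) = −D(τ) · Y(τ) for all τ ∈ ℝ, with Z(0) = H₀ · Y(0) for a symmetric complex matrix H₀ with Im H₀ positive definite, and assume Y(τ) is invertible for every τ ∈ ℝ. Set H(τ) := Z(τ) · Y(τ)⁻¹. Then the real-valued function τ ↦ det(Im H(τ)) · |det Y(τ)|² is constant on ℝ. -/

import Mathlib

open Matrix

private lemma matconst {f : ℝ → Matrix (Fin 3) (Fin 3) ℂ}
    (h : ∀ (τ : ℝ) (i j : Fin 3), HasDerivAt (fun t => f t i j) 0 τ) :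
    ∀ τ σ : ℝ, f τ = f σ := by
  intro τ σ
  ext i j
  exact is_const_of_deriv_eq_zero (fun x => (h x i j).differentiableAt)
    (fun x => (h x i j).deriv) τ σ

theorem stmt_7
    (C : Matrix (Fin 3) (Fin 3) ℂ) (hC : C = Matrix.diagonal ![0, 2, 2])
    (D : ℝ → Matrix (Fin 3) (Fin 3) ℝ)
    (hDcont : ∀ i j, Continuous (fun τ => D τ i j))
    (hDsymm : ∀ τ, (D τ)ᵀ = D τ)
    (Y Z : ℝ → Matrix (Fin 3) (Fin 3) ℂ)
    (hY : ∀ (τ : ℝ) (i j : Fin 3),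
      HasDerivAt (fun t => Y t i j) ((C * Z τ) i j) τ)
    (hZ : ∀ (τ : ℝ) (i j : Fin 3),
      HasDerivAt (fun t => Z t i j) ((-(((D τ).map Complex.ofReal) * Y τ)) i j) τ)
    (H0 : Matrix (Fin 3) (Fin 3) ℂ) (hH0symm : H0ᵀ = H0)
    (hH0pos : (H0.map Complex.im).PosDef)
    (hZ0 : Z 0 = H0 * Y 0)
    (hYinv : ∀ τ : ℝ, IsUnit (Y τ)) :
    ∀ τ σ : ℝ,
      ((Z τ * (Y τ)⁻¹).map Complex.im).det * ‖(Y τ).det‖ ^ 2 =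
      ((Z σ * (Y σ)⁻¹).map Complex.im).det * ‖(Y σ).det‖ ^ 2 := by
  set Dc : ℝ → Matrix (Fin 3) (Fin 3) ℂ := fun τ => (D τ).map Complex.ofReal with hDcdef
  have hCT : Cᵀ = C := by rw [hC, Matrix.diagonal_transpose]
  have hCH : Cᴴ = C := by
    have hs : star (![0, 2, 2] : Fin 3 → ℂ) = ![0, 2, 2] := by
      funext i
      fin_cases i <;> simp [Pi.star_apply]
    rw [hC, Matrix.diagonal_conjTranspose, hs]
  have hDcT : ∀ τ, (Dc τ)ᵀ = Dc τ := by
    intro τ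
    ext i j
    simp only [Matrix.transpose_apply, hDcdef, Matrix.map_apply]
    exact_mod_cast congrFun (congrFun (hDsymm τ) i) j
  have hDcH : ∀ τ, (Dc τ)ᴴ = Dc τ := by
    intro τ
    ext i j
    simp only [Matrix.conjTranspose_apply, hDcdef, Matrix.map_apply, Complex.star_def,
      Complex.conj_ofReal]
    exact_mod_cast congrFun (congrFun (hDsymm τ) i) j
  -- derivatives of the bilinear quantities
  have hYZT : ∀ (τ : ℝ) (i j : Fin 3), HasDerivAt (fun t => ((Y t)ᵀ * Z t) i j)
      (((C * Z τ)ᵀ * Z τ + (Y τ)ᵀ * (-(Dc τ * Y τ))) i j) τ := by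
    intro τ i j
    simp only [Matrix.mul_apply, Matrix.transpose_apply, Matrix.add_apply,
      ← Finset.sum_add_distrib]
    exact HasDerivAt.fun_sum fun k _ => (hY τ k i).mul (hZ τ k j)
  have hZYT : ∀ (τ : ℝ) (i j : Fin 3), HasDerivAt (fun t => ((Z t)ᵀ * Y t) i j)
      (((-(Dc τ * Y τ))ᵀ * Y τ + (Z τ)ᵀ * (C * Z τ)) i j) τ := by
    intro τ i j
    simp only [Matrix.mul_apply, Matrix.transpose_apply, Matrix.add_apply,
      ← Finset.sum_add_distrib]
    exact HasDerivAt.fun_sum fun k _ => (hZ τ k i).mul (hY τ k j)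
  have hYZH : ∀ (τ : ℝ) (i j : Fin 3), HasDerivAt (fun t => ((Y t)ᴴ * Z t) i j)
      (((C * Z τ)ᴴ * Z τ + (Y τ)ᴴ * (-(Dc τ * Y τ))) i j) τ := by
    intro τ i j
    simp only [Matrix.mul_apply, Matrix.conjTranspose_apply, Matrix.add_apply,
      ← Finset.sum_add_distrib]
    exact HasDerivAt.fun_sum fun k _ => (hY τ k i).star.mul (hZ τ k j)
  have hZYH : ∀ (τ : ℝ) (i j : Fin 3), HasDerivAt (fun t => ((Z t)ᴴ * Y t) i j)
      (((-(Dc τ * Y τ))ᴴ * Y τ + (Z τ)ᴴ * (C * Z τ)) i j) τ := by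
    intro τ i j
    simp only [Matrix.mul_apply, Matrix.conjTranspose_apply, Matrix.add_apply,
      ← Finset.sum_add_distrib]
    exact HasDerivAt.fun_sum fun k _ => (hZ τ k i).star.mul (hY τ k j)
  -- N := Yᵀ Z - Zᵀ Y is constant
  have hNkey : ∀ τ : ℝ, ((C * Z τ)ᵀ * Z τ + (Y τ)ᵀ * (-(Dc τ * Y τ)))
      - ((-(Dc τ * Y τ))ᵀ * Y τ + (Z τ)ᵀ * (C * Z τ)) = 0 := by
    intro τ
    rw [Matrix.transpose_mul, Matrix.transpose_neg, Matrix.transpose_mul, hCT, hDcT]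
    noncomm_ring
  have hNconst : ∀ τ σ : ℝ, (Y τ)ᵀ * Z τ - (Z τ)ᵀ * Y τ = (Y σ)ᵀ * Z σ - (Z σ)ᵀ * Y σ := by
    apply matconst
    intro τ i j
    have h := (hYZT τ i j).sub (hZYT τ i j)
    have h0 : ((C * Z τ)ᵀ * Z τ + (Y τ)ᵀ * (-(Dc τ * Y τ))) i j
        - ((-(Dc τ * Y τ))ᵀ * Y τ + (Z τ)ᵀ * (C * Z τ)) i j = 0 := by
      rw [← Matrix.sub_apply, hNkey τ, Matrix.zero_apply]
    rw [h0] at h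
    exact h
  have hN0 : (Y 0)ᵀ * Z 0 - (Z 0)ᵀ * Y 0 = 0 := by
    rw [hZ0, Matrix.transpose_mul, hH0symm, ← Matrix.mul_assoc, sub_self]
  have hNzero : ∀ τ : ℝ, (Z τ)ᵀ * Y τ = (Y τ)ᵀ * Z τ := by
    intro τ
    have h1 := (hNconst τ 0).trans hN0
    exact (sub_eq_zero.mp h1).symm
  -- M := Yᴴ Z - Zᴴ Y is constant
  have hMkey : ∀ τ : ℝ, ((C * Z τ)ᴴ * Z τ + (Y τ)ᴴ * (-(Dc τ * Y τ)))
      - ((-(Dc τ * Y τ))ᴴ * Y τ + (Z τ)ᴴ * (C * Z τ)) = 0 := by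
    intro τ
    rw [Matrix.conjTranspose_mul, Matrix.conjTranspose_neg, Matrix.conjTranspose_mul, hCH, hDcH]
    noncomm_ring
  have hMconst : ∀ τ σ : ℝ, (Y τ)ᴴ * Z τ - (Z τ)ᴴ * Y τ = (Y σ)ᴴ * Z σ - (Z σ)ᴴ * Y σ := by
    apply matconst
    intro τ i j
    have h := (hYZH τ i j).sub (hZYH τ i j)
    have h0 : ((C * Z τ)ᴴ * Z τ + (Y τ)ᴴ * (-(Dc τ * Y τ))) i j
        - ((-(Dc τ * Y τ))ᴴ * Y τ + (Z τ)ᴴ * (C * Z τ)) i j = 0 := by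
      rw [← Matrix.sub_apply, hMkey τ, Matrix.zero_apply]
    rw [h0] at h
    exact h
  -- main determinant identity
  have main : ∀ τ : ℝ, ((Y τ)ᴴ * Z τ - (Z τ)ᴴ * Y τ).det =
      (2 * Complex.I) ^ 3 *
        Complex.ofReal (((Z τ * (Y τ)⁻¹).map Complex.im).det * ‖(Y τ).det‖ ^ 2) := by
    intro τ
    set u := Y τ with hu
    set v := Z τ with hvv
    set h := v * u⁻¹ with hh
    have hud : IsUnit u.det := (Matrix.isUnit_iff_isUnit_det u).mp (hYinv τ)
    have huu : u⁻¹ * u = 1 := Matrix.nonsing_inv_mul u hud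
    have huu' : u * u⁻¹ = 1 := Matrix.mul_nonsing_inv u hud
    have hv : v = h * u := by rw [hh, Matrix.mul_assoc, huu, Matrix.mul_one]
    have hsymm : hᵀ = h := by
      have h1 : vᵀ * u = uᵀ * v := hNzero τ
      have h2 : vᵀ = uᵀ * v * u⁻¹ := by
        rw [← h1, Matrix.mul_assoc, huu', Matrix.mul_one]
      calc hᵀ = u⁻¹ᵀ * vᵀ := by rw [hh, Matrix.transpose_mul]
        _ = u⁻¹ᵀ * uᵀ * (v * u⁻¹) := by rw [h2]; simp only [Matrix.mul_assoc]
        _ = (u * u⁻¹)ᵀ * (v * u⁻¹) := by rw [Matrix.transpose_mul]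
        _ = h := by rw [huu', Matrix.transpose_one, Matrix.one_mul, hh]
    have hvH : vᴴ = uᴴ * (h.map (starRingEnd ℂ)) := by
      rw [hv, Matrix.conjTranspose_mul]
      congr 1
      ext i j
      simp only [Matrix.conjTranspose_apply, Matrix.map_apply]
      have hji : h j i = h i j := congrFun (congrFun hsymm i) j
      rw [hji]
      rfl
    have hM : uᴴ * v - vᴴ * u = uᴴ * (h - h.map (starRingEnd ℂ)) * u := by
      rw [hvH, hv, Matrix.mul_sub, Matrix.sub_mul, ← Matrix.mul_assoc]
    have hIm : h - h.map (starRingEnd ℂ) =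
        (2 * Complex.I) • ((h.map Complex.im).map Complex.ofReal) := by
      ext i j
      simp only [Matrix.sub_apply, Matrix.map_apply, Matrix.smul_apply, smul_eq_mul]
      rw [Complex.sub_conj]
      push_cast
      ring
    have hmapdet : ((h.map Complex.im).map Complex.ofReal).det
        = Complex.ofReal ((h.map Complex.im).det) := by
      rw [show (h.map Complex.im).map Complex.ofReal
          = (Complex.ofRealHom).mapMatrix (h.map Complex.im) from rfl,
        ← RingHom.map_det]
      rfl
    have habs : star u.det * u.det = (‖u.det‖ : ℂ) ^ 2 := by
      rw [show star u.det = (starRingEnd ℂ) u.det from rfl]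
      rw [show (starRingEnd ℂ) u.det * u.det = (Complex.normSq u.det : ℂ) from
        (Complex.normSq_eq_conj_mul_self).symm ▸ rfl]
      rw [← Complex.sq_norm]
      push_cast
      ring
    rw [hM, hIm, Matrix.det_mul, Matrix.det_mul, Matrix.det_smul, Matrix.det_conjTranspose,
      hmapdet, Fintype.card_fin]
    push_cast
    linear_combination (2 * Complex.I) ^ 3 * Complex.ofReal ((h.map Complex.im).det) * habs
  -- conclusion
  intro τ σ
  have hdet := congrArg Matrix.det (hMconst τ σ)
  rw [main τ, main σ] at hdet
  have h8 : (2 * Complex.I) ^ 3 ≠ 0 := by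
    apply pow_ne_zero
    simp [Complex.I_ne_zero]
  exact Complex.ofReal_injective (mul_left_cancel₀ h8 hdet)
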